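/- (Abstract core of Lemma 3.2(iii): bounded invertibility of I + (η + τβ)𝒞_λ.) Let H be a complex Hilbert space, let C and B be bounded linear operators on H with B ∘ B = id, let η, τ ∈ ℝ and c > 0 with η² − τ² ≠ 4c², and set M := η·C + τ·(B ∘ C). Assume that the operators C ∘ B + B ∘ C and C ∘ C − (1/(4c²))·id are compact, and that both id + M and id − M are injective. Then id + M is bijective, and hence has a bounded everywhere defined inverse. -/

import Mathlib

noncomputable section

open Metric Filter

namespace FredholmAux

variable {H : Type*} [NormedAddCommGroup H] [NormedSpace ℂ H] [CompleteSpace H]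

/-- If `1 + K` is injective with `K` compact, then `1 + K` is bounded below. -/
lemma bound_below (K : H →L[ℂ] H) (hK : IsCompactOperator ⇑K)
    (hinj : Function.Injective ⇑(1 + K)) :
    ∃ c : ℝ, 0 < c ∧ ∀ x, c * ‖x‖ ≤ ‖(1 + K) x‖ := by
  by_contra h
  push_neg at h
  have hex : ∀ n : ℕ, ∃ u : H, ‖u‖ = 1 ∧ ‖(1 + K) u‖ < ((n : ℝ) + 1)⁻¹ := by
    intro n
    obtain ⟨x, hx⟩ := h ((n : ℝ) + 1)⁻¹ (by positivity)
    have hx0 : x ≠ 0 := by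
      rintro rfl
      simp at hx
    have hnx : (0 : ℝ) < ‖x‖ := norm_pos_iff.2 hx0
    refine ⟨‖x‖⁻¹ • x, ?_, ?_⟩
    · simp [norm_smul, inv_mul_cancel₀ hnx.ne']
    · rw [ContinuousLinearMap.map_smul_of_tower, norm_smul]
      simp only [norm_inv, norm_norm]
      rw [inv_mul_lt_iff₀ hnx]
      calc ‖(1 + K) x‖ < ((n : ℝ) + 1)⁻¹ * ‖x‖ := hx
        _ = ‖x‖ * ((n : ℝ) + 1)⁻¹ := by ring
  choose u hu1 hu2 using hex
  have hcompact : IsCompact (closure (⇑K '' closedBall 0 1)) :=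
    hK.isCompact_closure_image_closedBall 1
  have hmem : ∀ n, K (u n) ∈ closure (⇑K '' closedBall 0 1) := fun n =>
    subset_closure ⟨u n, by simp [mem_closedBall_zero_iff, (hu1 n).le], rfl⟩
  obtain ⟨z, -, φ, hφ, htend⟩ := hcompact.tendsto_subseq hmem
  have hT0 : Tendsto (fun n => (1 + K) (u (φ n))) atTop (nhds 0) := by
    rw [tendsto_zero_iff_norm_tendsto_zero]
    refine squeeze_zero (fun n => norm_nonneg _) (fun n => (hu2 (φ n)).le) ?_
    refine tendsto_inv_atTop_zero.comp ?_
    apply tendsto_atTop_add_const_right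
    exact tendsto_natCast_atTop_atTop.comp hφ.tendsto_atTop
  have hut : Tendsto (fun n => u (φ n)) atTop (nhds (-z)) := by
    have : (fun n => u (φ n)) = fun n => (1 + K) (u (φ n)) - K (u (φ n)) := by
      funext n
      simp [ContinuousLinearMap.add_apply]
    rw [this]
    simpa using hT0.sub htend
  have hz1 : ‖(-z : H)‖ = 1 := by
    have h1 : Tendsto (fun n => ‖u (φ n)‖) atTop (nhds ‖(-z : H)‖) :=
      (continuous_norm.tendsto _).comp hut
    have h2 : Tendsto (fun n => ‖u (φ n)‖) atTop (nhds 1) := by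
      simp [hu1]
    exact tendsto_nhds_unique h1 h2
  have hTz : (1 + K) (-z) = 0 := by
    have := ((1 + K).continuous.tendsto _).comp hut
    exact tendsto_nhds_unique this hT0
  have : (-z : H) = 0 := hinj (by simpa using hTz)
  rw [this] at hz1
  simp at hz1

/-- closed range -/
lemma closed_range (K : H →L[ℂ] H) (hK : IsCompactOperator ⇑K)
    (hinj : Function.Injective ⇑(1 + K)) :
    IsClosed ((LinearMap.range ((1 + K : H →L[ℂ] H) : H →ₗ[ℂ] H) : Submodule ℂ H) : Set H) := by
  obtain ⟨c, hc, hb⟩ := bound_below K hK hinj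
  have hanti : AntilipschitzWith (⟨c⁻¹, by positivity⟩ : NNReal) ⇑(1 + K) := by
    apply ContinuousLinearMap.antilipschitz_of_bound
    intro x
    show ‖x‖ ≤ c⁻¹ * ‖(1 + K) x‖
    rw [← div_eq_inv_mul, le_div_iff₀ hc, mul_comm]
    exact hb x
  have := hanti.isClosed_range (1 + K).uniformContinuous
  rw [LinearMap.coe_range, ContinuousLinearMap.coe_coe]; exact this

lemma pow_sub_one_compact (K : H →L[ℂ] H) (hK : IsCompactOperator ⇑K) :
    ∀ n : ℕ, IsCompactOperator ⇑((1 + K) ^ n - 1) := by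
  intro n
  induction n with
  | zero => simpa using isCompactOperator_zero
  | succ n ih =>
      have heq : (1 + K) ^ (n + 1) - 1 = ((1 + K) ^ n - 1) * (1 + K) + K := by
        rw [pow_succ]; noncomm_ring
      rw [heq]
      have h1 : IsCompactOperator ⇑(((1 + K) ^ n - 1) * (1 + K)) := by
        have := ih.comp_clm (1 + K)
        exact this
      have := h1.add hK
      simpa [ContinuousLinearMap.add_apply] using this

lemma pow_injective (T : H →L[ℂ] H) (hinj : Function.Injective ⇑T) :
    ∀ n : ℕ, Function.Injective ⇑(T ^ n) := by
  intro n
  induction n with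
  | zero => intro x y h; simpa using h
  | succ n ih =>
      rw [pow_succ]
      intro x y hxy
      rw [ContinuousLinearMap.mul_apply, ContinuousLinearMap.mul_apply] at hxy
      exact hinj (ih hxy)

/-- Fredholm alternative, surjectivity part. -/
lemma fredholm_surjective (K : H →L[ℂ] H) (hK : IsCompactOperator ⇑K)
    (hinj : Function.Injective ⇑(1 + K)) :
    Function.Surjective ⇑(1 + K) := by
  set T := 1 + K with hT
  by_contra hsurj
  rw [Function.Surjective] at hsurj
  push_neg at hsurj
  obtain ⟨y, hy⟩ := hsurj
  have hpow : ∀ n : ℕ, (1 : H →L[ℂ] H) + (T ^ n - 1) = T ^ n := fun n => by abel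
  have hpinj : ∀ n, Function.Injective ⇑(T ^ n) := pow_injective T hinj
  have hVc : ∀ n, IsClosed ((LinearMap.range ((T ^ n : H →L[ℂ] H) : H →ₗ[ℂ] H) : Submodule ℂ H) : Set H) := by
    intro n
    have h1 := closed_range (T ^ n - 1) (pow_sub_one_compact K hK n)
      (by rw [hpow n]; exact hpinj n)
    rwa [hpow n] at h1
  have hstep : ∀ n : ℕ, LinearMap.range ((T ^ (n + 1) : H →L[ℂ] H) : H →ₗ[ℂ] H) ≤ LinearMap.range ((T ^ n : H →L[ℂ] H) : H →ₗ[ℂ] H) := by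
    intro n x hx
    obtain ⟨w, rfl⟩ := hx
    exact ⟨T w, by rw [pow_succ]; simp only [ContinuousLinearMap.coe_coe, ContinuousLinearMap.mul_apply]⟩
  have hmono : ∀ {n m : ℕ}, n ≤ m →
      LinearMap.range ((T ^ m : H →L[ℂ] H) : H →ₗ[ℂ] H) ≤ LinearMap.range ((T ^ n : H →L[ℂ] H) : H →ₗ[ℂ] H) := by
    intro n m h
    induction h with
    | refl => exact le_rfl
    | @step k h ih => exact (hstep k).trans ih
  have hnot : ∀ n : ℕ, (T ^ n) y ∉ LinearMap.range ((T ^ (n + 1) : H →L[ℂ] H) : H →ₗ[ℂ] H) := by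
    intro n hmem
    obtain ⟨w, hw⟩ := hmem
    rw [pow_succ, ContinuousLinearMap.coe_coe, ContinuousLinearMap.mul_apply] at hw
    exact hy w (hpinj n hw)
  have hriesz : ∀ n : ℕ, ∃ u : H, u ∈ LinearMap.range ((T ^ n : H →L[ℂ] H) : H →ₗ[ℂ] H) ∧ ‖u‖ = 1 ∧
      ∀ v ∈ LinearMap.range ((T ^ (n + 1) : H →L[ℂ] H) : H →ₗ[ℂ] H), (1 : ℝ) / 2 ≤ ‖u - v‖ := by
    intro n
    set Vn : Submodule ℂ H := LinearMap.range ((T ^ n : H →L[ℂ] H) : H →ₗ[ℂ] H) with hVn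
    set F : Submodule ℂ Vn := (LinearMap.range ((T ^ (n + 1) : H →L[ℂ] H) : H →ₗ[ℂ] H)).comap Vn.subtype with hF
    have hFc : IsClosed (F : Set Vn) := by
      have : (F : Set Vn) =
          (Vn.subtype) ⁻¹' ((LinearMap.range ((T ^ (n + 1) : H →L[ℂ] H) : H →ₗ[ℂ] H) : Submodule ℂ H) : Set H) := rfl
      rw [this]
      exact (hVc (n + 1)).preimage continuous_subtype_val
    have hFne : ∃ x : Vn, x ∉ F := by
      refine ⟨⟨(T ^ n) y, LinearMap.mem_range_self _ y⟩, ?_⟩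
      simpa [hF, Submodule.mem_comap] using hnot n
    obtain ⟨x, hxF, hx⟩ := riesz_lemma hFc hFne (by norm_num : (1 : ℝ) / 2 < 1)
    have hx0 : (x : H) ≠ 0 := by
      intro h0
      have hx00 : x = 0 := Subtype.coe_injective (by simpa using h0)
      exact hxF (by rw [hx00]; exact F.zero_mem)
    have hnx : (0 : ℝ) < ‖(x : H)‖ := norm_pos_iff.2 hx0
    refine ⟨‖(x : H)‖⁻¹ • (x : H), Vn.smul_of_tower_mem _ x.2,
      by simp [norm_smul, inv_mul_cancel₀ hnx.ne'], ?_⟩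
    intro v hv
    have hsv : ‖(x : H)‖ • v ∈ LinearMap.range ((T ^ (n + 1) : H →L[ℂ] H) : H →ₗ[ℂ] H) :=
      (LinearMap.range ((T ^ (n + 1) : H →L[ℂ] H) : H →ₗ[ℂ] H)).smul_of_tower_mem _ hv
    have hxv : (⟨‖(x : H)‖ • v, hstep n hsv⟩ : Vn) ∈ F := by
      simpa [hF, Submodule.mem_comap] using hsv
    have hb := hx _ hxv
    have hnorm : ‖x - (⟨‖(x : H)‖ • v, hstep n hsv⟩ : Vn)‖ = ‖(x : H) - ‖(x : H)‖ • v‖ := rfl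
    rw [hnorm] at hb
    have heq : ‖(x : H)‖⁻¹ • (x : H) - v = ‖(x : H)‖⁻¹ • ((x : H) - ‖(x : H)‖ • v) := by
      rw [smul_sub, smul_smul, inv_mul_cancel₀ hnx.ne', one_smul]
    rw [heq, norm_smul, norm_inv, norm_norm, ← div_eq_inv_mul, le_div_iff₀ hnx]
    exact hb
  choose u huV hu1 hud using hriesz
  have hKx : ∀ x : H, K x = T x - x := fun x => by
    simp [hT, ContinuousLinearMap.add_apply]
  have hkey : ∀ n m : ℕ, n < m → (1 : ℝ) / 2 ≤ ‖K (u n) - K (u m)‖ := by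
    intro n m hnm
    set v : H := T (u n) - T (u m) + u m with hv
    have hTun : T (u n) ∈ LinearMap.range ((T ^ (n + 1) : H →L[ℂ] H) : H →ₗ[ℂ] H) := by
      obtain ⟨w, hw⟩ := huV n
      exact ⟨w, by rw [pow_succ', ContinuousLinearMap.coe_coe, ContinuousLinearMap.mul_apply, ← ContinuousLinearMap.coe_coe (T ^ n), hw]⟩
    have hTum : T (u m) ∈ LinearMap.range ((T ^ (n + 1) : H →L[ℂ] H) : H →ₗ[ℂ] H) := by
      apply hmono (Nat.succ_le_succ hnm.le)
      obtain ⟨w, hw⟩ := huV m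
      exact ⟨w, by rw [pow_succ', ContinuousLinearMap.coe_coe, ContinuousLinearMap.mul_apply, ← ContinuousLinearMap.coe_coe (T ^ m), hw]⟩
    have hum : u m ∈ LinearMap.range ((T ^ (n + 1) : H →L[ℂ] H) : H →ₗ[ℂ] H) := hmono hnm (huV m)
    have hvmem : v ∈ LinearMap.range ((T ^ (n + 1) : H →L[ℂ] H) : H →ₗ[ℂ] H) :=
      Submodule.add_mem _ (Submodule.sub_mem _ hTun hTum) hum
    have hcalc : K (u n) - K (u m) = v - u n := by
      rw [hKx, hKx, hv]; abel
    rw [hcalc, norm_sub_rev]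
    exact hud n v hvmem
  have hcompact : IsCompact (closure (⇑K '' closedBall 0 1)) :=
    hK.isCompact_closure_image_closedBall 1
  have hmem : ∀ n, K (u n) ∈ closure (⇑K '' closedBall 0 1) := fun n =>
    subset_closure ⟨u n, by simp [mem_closedBall_zero_iff, (hu1 n).le], rfl⟩
  obtain ⟨z, -, φ, hφ, htend⟩ := hcompact.tendsto_subseq hmem
  obtain ⟨N, hN⟩ := (Metric.tendsto_atTop.1 htend) (1 / 4) (by norm_num)
  have h1 := hN N le_rfl
  have h2 := hN (N + 1) (Nat.le_succ N)
  have hd : dist (K (u (φ N))) (K (u (φ (N + 1)))) < 1 / 2 := by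
    calc dist (K (u (φ N))) (K (u (φ (N + 1))))
        ≤ dist (K (u (φ N))) z + dist z (K (u (φ (N + 1)))) := dist_triangle _ _ _
      _ < 1 / 4 + 1 / 4 := by
          rw [dist_comm z]
          exact add_lt_add h1 h2
      _ = 1 / 2 := by norm_num
  have hge := hkey (φ N) (φ (N + 1)) (hφ (Nat.lt_succ_self N))
  rw [← dist_eq_norm] at hge
  linarith

/-- Fredholm alternative for `T` with `T - μ•1` compact, `μ ≠ 0`. -/
lemma fredholm_surjective' (T : H →L[ℂ] H) (μ : ℂ) (hμ : μ ≠ 0)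
    (hcmp : IsCompactOperator ⇑(T - μ • 1))
    (hinj : Function.Injective ⇑T) : Function.Surjective ⇑T := by
  set K : H →L[ℂ] H := μ⁻¹ • (T - μ • 1) with hKdef
  have hKc : IsCompactOperator ⇑K := by
    have := hcmp.smul μ⁻¹
    simpa [hKdef, ContinuousLinearMap.coe_smul'] using this
  have hTe : T = μ • (1 + K) := by
    rw [hKdef, smul_add, smul_smul, mul_inv_cancel₀ hμ, one_smul]
    abel
  have hinj' : Function.Injective ⇑(1 + K) := by
    intro a b hab
    apply hinj
    rw [hTe]
    simp only [ContinuousLinearMap.smul_apply, hab]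
  have hs := fredholm_surjective K hKc hinj'
  intro y
  obtain ⟨x, hx⟩ := hs (μ⁻¹ • y)
  refine ⟨x, ?_⟩
  rw [hTe]
  simp only [ContinuousLinearMap.smul_apply, hx, smul_smul, mul_inv_cancel₀ hμ, one_smul]

end FredholmAux



theorem one_add_M_bijective (H : Type*) [NormedAddCommGroup H]
    [InnerProductSpace ℂ H] [CompleteSpace H]
    (C B : H →L[ℂ] H) (hB : B * B = 1) (η τ c : ℝ) (hc : 0 < c)
    (hcrit : η ^ 2 - τ ^ 2 ≠ 4 * c ^ 2)
    (hcmp1 : IsCompactOperator ⇑(C * B + B * C))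
    (hcmp2 : IsCompactOperator
      ⇑(C * C - ((1 : ℂ) / (4 * (c : ℂ) ^ 2)) • (1 : H →L[ℂ] H)))
    (hinj1 : Function.Injective ⇑(1 + ((η : ℂ) • C + (τ : ℂ) • (B * C))))
    (hinj2 : Function.Injective ⇑(1 - ((η : ℂ) • C + (τ : ℂ) • (B * C)))) :
    Function.Bijective ⇑(1 + ((η : ℂ) • C + (τ : ℂ) • (B * C))) ∧
    ∃ N : H →L[ℂ] H,
      (1 + ((η : ℂ) • C + (τ : ℂ) • (B * C))) * N = 1 ∧
      N * (1 + ((η : ℂ) • C + (τ : ℂ) • (B * C))) = 1 := by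
  set M : H →L[ℂ] H := (η : ℂ) • C + (τ : ℂ) • (B * C) with hM
  set s : ℂ := ((η : ℂ) ^ 2 - (τ : ℂ) ^ 2) / (4 * (c : ℂ) ^ 2) with hs
  set A1 : H →L[ℂ] H := C * B + B * C with hA1
  set A2 : H →L[ℂ] H := C * C - ((1 : ℂ) / (4 * (c : ℂ) ^ 2)) • 1 with hA2
  have hc2 : (4 : ℂ) * (c : ℂ) ^ 2 ≠ 0 := by
    have hcne : (c : ℂ) ≠ 0 := by exact_mod_cast hc.ne'
    exact mul_ne_zero (by norm_num) (pow_ne_zero 2 hcne)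
  -- the key operator identity
  have hBB : ∀ z : H, B (B z) = z := fun z => by
    rw [← ContinuousLinearMap.mul_apply, hB, ContinuousLinearMap.one_apply]
  have hkey : M * M - s • 1 =
      ((η : ℂ) ^ 2 - (τ : ℂ) ^ 2) • A2 + ((η : ℂ) * (τ : ℂ)) • (A1 * C)
        + ((τ : ℂ) ^ 2) • (B * (A1 * C)) := by
    have hsone : s • (1 : H →L[ℂ] H) =
        ((η : ℂ) ^ 2 - (τ : ℂ) ^ 2) • (((1 : ℂ) / (4 * (c : ℂ) ^ 2)) • 1) := by
      rw [smul_smul, hs]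
      congr 1
      field_simp
    rw [hsone]
    ext x
    simp only [hM, hA1, hA2, ContinuousLinearMap.mul_apply, ContinuousLinearMap.add_apply,
      ContinuousLinearMap.sub_apply, ContinuousLinearMap.smul_apply,
      ContinuousLinearMap.one_apply, map_add, map_smul, hBB]
    module
  have hA1C : IsCompactOperator ⇑(A1 * C) := hcmp1.comp_clm C
  have hBA1C : IsCompactOperator ⇑(B * (A1 * C)) := hA1C.clm_comp B
  have hMM : IsCompactOperator ⇑(M * M - s • 1) := by
    rw [hkey]
    have h1 := hcmp2.smul ((η : ℂ) ^ 2 - (τ : ℂ) ^ 2)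
    have h2 := hA1C.smul ((η : ℂ) * (τ : ℂ))
    have h3 := hBA1C.smul ((τ : ℂ) ^ 2)
    have := (h1.add h2).add h3
    simpa [ContinuousLinearMap.coe_smul', ContinuousLinearMap.add_apply] using this
  set μ : ℂ := 1 - s with hμdef
  have hμ : μ ≠ 0 := by
    rw [hμdef, sub_ne_zero, hs]
    intro h
    apply hcrit
    have h2 : ((η : ℂ) ^ 2 - (τ : ℂ) ^ 2) = 4 * (c : ℂ) ^ 2 := by
      have h3 := h.symm
      exact (div_eq_one_iff_eq hc2).1 h3
    exact_mod_cast h2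
  set S : H →L[ℂ] H := (1 - M) * (1 + M) with hSdef
  have hS1 : S = 1 - M * M := by rw [hSdef]; noncomm_ring
  have hS2 : S = (1 + M) * (1 - M) := by rw [hSdef]; noncomm_ring
  have hScmp : IsCompactOperator ⇑(S - μ • 1) := by
    have heq : S - μ • 1 = -(M * M - s • 1) := by
      rw [hS1, hμdef, sub_smul, one_smul]
      abel
    rw [heq]
    simpa using hMM.neg
  have hSinj : Function.Injective ⇑S := by
    rw [hSdef]
    exact hinj2.comp hinj1
  have hSsurj : Function.Surjective ⇑S := FredholmAux.fredholm_surjective' S μ hμ hScmp hSinj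
  have hsurj : Function.Surjective ⇑(1 + M) := by
    intro y
    obtain ⟨x, hx⟩ := hSsurj y
    rw [hS2, ContinuousLinearMap.mul_apply] at hx
    exact ⟨(1 - M) x, hx⟩
  have hbij : Function.Bijective ⇑(1 + M) := ⟨hinj1, hsurj⟩
  refine ⟨hbij, ?_⟩
  have hker : LinearMap.ker ((1 + M : H →L[ℂ] H) : H →ₗ[ℂ] H) = ⊥ := LinearMap.ker_eq_bot.2 hinj1
  have hran : LinearMap.range ((1 + M : H →L[ℂ] H) : H →ₗ[ℂ] H) = ⊤ := LinearMap.range_eq_top.2 hsurj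
  set e := ContinuousLinearEquiv.ofBijective (1 + M) hker hran with he
  refine ⟨(e.symm : H →L[ℂ] H), ?_, ?_⟩
  · ext x
    simp only [ContinuousLinearMap.mul_apply, ContinuousLinearMap.coe_coe,
      ContinuousLinearMap.one_apply]
    exact ContinuousLinearEquiv.ofBijective_apply_symm_apply (1 + M) hker hran x
  · ext x
    simp only [ContinuousLinearMap.mul_apply, ContinuousLinearMap.coe_coe,
      ContinuousLinearMap.one_apply]
    exact ContinuousLinearEquiv.ofBijective_symm_apply_apply (1 + M) hker hran x

end
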